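/- Let n be a natural number and let X, Y be n×n complex matrices. Then ‖|X*| − |Y*|‖₂² + ‖|X| − |Y|‖₂² ≤ 2‖X − Y‖₂². -/

import Mathlib

open Matrix
open scoped ComplexOrder

/-- Hilbert–Schmidt (Frobenius) norm: ‖X‖₂ = √(Re Tr(XᴴX)). -/
noncomputable def hsNorm {n : ℕ} (X : Matrix (Fin n) (Fin n) ℂ) : ℝ :=
  Real.sqrt ((Matrix.trace (Xᴴ * X)).re)

/-- Angle Θ(X,Y) = arccos(Re Tr(YᴴX) / (‖X‖₂‖Y‖₂)). -/
noncomputable def theta {n : ℕ} (X Y : Matrix (Fin n) (Fin n) ℂ) : ℝ :=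
  Real.arccos ((Matrix.trace (Yᴴ * X)).re / (hsNorm X * hsNorm Y))

/-- |X| : the positive semidefinite square root of XᴴX. -/
noncomputable def matAbs {n : ℕ} (X : Matrix (Fin n) (Fin n) ℂ) : Matrix (Fin n) (Fin n) ℂ :=
  ((Matrix.posSemidef_conjTranspose_mul_self X).1.eigenvectorUnitary : Matrix (Fin n) (Fin n) ℂ) *
    Matrix.diagonal ((↑) ∘ Real.sqrt ∘ (Matrix.posSemidef_conjTranspose_mul_self X).1.eigenvalues) *
    (star ((Matrix.posSemidef_conjTranspose_mul_self X).1.eigenvectorUnitary : Matrix (Fin n) (Fin n) ℂ))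

section Aux

variable {m : Type*} [Fintype m] [DecidableEq m]

open scoped MatrixOrder

/-- Generalized matrix absolute value, for an arbitrary finite index type. -/
noncomputable def mAbs (X : Matrix m m ℂ) : Matrix m m ℂ :=
  ((Matrix.posSemidef_conjTranspose_mul_self X).1.eigenvectorUnitary : Matrix m m ℂ) *
    Matrix.diagonal ((↑) ∘ Real.sqrt ∘ (Matrix.posSemidef_conjTranspose_mul_self X).1.eigenvalues) *
    (star ((Matrix.posSemidef_conjTranspose_mul_self X).1.eigenvectorUnitary : Matrix m m ℂ))

lemma mAbs_eq (X : Matrix m m ℂ) : mAbs X = CFC.sqrt (Xᴴ * X) := by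
  have hA := Matrix.posSemidef_conjTranspose_mul_self X
  rw [CFC.sqrt_eq_cfc, cfc_nnreal_eq_real _ _ hA.nonneg, hA.1.cfc_eq]
  simp only [Matrix.IsHermitian.cfc, mAbs, Unitary.conjStarAlgAut_apply]
  congr 2
  funext i j
  simp [Matrix.diagonal_apply, max_eq_left (hA.eigenvalues_nonneg i)]

lemma mAbs_eq_of_sq_eq {A B : Matrix m m ℂ} (hB : B.PosSemidef) (h : B ^ 2 = Aᴴ * A) :
    B = mAbs A := by
  rw [mAbs_eq]
  exact (CFC.sqrt_unique (by rw [← pow_two]; exact h) hB.nonneg).symm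

lemma mAbs_posSemidef (X : Matrix m m ℂ) : (mAbs X).PosSemidef := by
  rw [mAbs_eq]; exact (CFC.sqrt_nonneg _).posSemidef

lemma mAbs_mul_self (X : Matrix m m ℂ) : mAbs X * mAbs X = Xᴴ * X := by
  rw [mAbs_eq]; exact CFC.sqrt_mul_sqrt_self _ (Matrix.posSemidef_conjTranspose_mul_self X).nonneg

lemma trace_re_nonneg {A : Matrix m m ℂ} (hA : A.PosSemidef) : 0 ≤ A.trace.re := by
  have h : (0 : ℂ) ≤ A.trace := by
    rw [Matrix.trace]
    refine Finset.sum_nonneg fun i _ => ?_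
    exact hA.diag_nonneg
  exact (Complex.le_def.mp h).1

lemma trace_mul_re_nonneg {A B : Matrix m m ℂ} (hA : A.PosSemidef) (hB : B.PosSemidef) :
    0 ≤ (A * B).trace.re := by
  have h1 : A * B = CFC.sqrt A * (CFC.sqrt A * B) := by
    rw [← Matrix.mul_assoc, CFC.sqrt_mul_sqrt_self A hA.nonneg]
  have hP : (CFC.sqrt A * B * CFC.sqrt A).PosSemidef := by
    have := hB.conjTranspose_mul_mul_same (CFC.sqrt A)
    rwa [(CFC.sqrt_nonneg A).posSemidef.1.eq] at this
  rw [h1, Matrix.trace_mul_comm]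
  exact trace_re_nonneg hP

lemma conj_diag_posSemidef {U : Matrix m m ℂ} (hU : U ∈ Matrix.unitaryGroup m ℂ)
    {d : m → ℝ} (hd : ∀ i, 0 ≤ d i) :
    (U * Matrix.diagonal (fun i => (d i : ℂ)) * star U).PosSemidef := by
  have hD : (Matrix.diagonal (fun i => (d i : ℂ))).PosSemidef :=
    Matrix.PosSemidef.diagonal fun i => Complex.zero_le_real.mpr (hd i)
  simpa [Matrix.star_eq_conjTranspose] using hD.mul_mul_conjTranspose_same U

lemma conj_mul_key {U : Matrix m m ℂ} (hU : star U * U = 1) (d e : m → ℂ) :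
    (U * Matrix.diagonal d * star U) * (U * Matrix.diagonal e * star U) =
      U * Matrix.diagonal (fun i => d i * e i) * star U := by
  calc (U * Matrix.diagonal d * star U) * (U * Matrix.diagonal e * star U)
      = U * (Matrix.diagonal d * ((star U * U) * (Matrix.diagonal e * star U))) := by
        simp only [Matrix.mul_assoc]
    _ = U * (Matrix.diagonal d * (Matrix.diagonal e * star U)) := by
        rw [hU, Matrix.one_mul]
    _ = U * Matrix.diagonal (fun i => d i * e i) * star U := by
        rw [← Matrix.diagonal_mul_diagonal]
        simp only [Matrix.mul_assoc]

lemma mAbs_of_hermitian {A : Matrix m m ℂ} (hA : A.IsHermitian) :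
    mAbs A = (hA.eigenvectorUnitary : Matrix m m ℂ) *
      Matrix.diagonal (fun i => ((|hA.eigenvalues i| : ℝ) : ℂ)) *
      star (hA.eigenvectorUnitary : Matrix m m ℂ) := by
  set U : Matrix m m ℂ := (hA.eigenvectorUnitary : Matrix m m ℂ) with hUdef
  have hU : star U * U = 1 := Matrix.mem_unitaryGroup_iff'.mp hA.eigenvectorUnitary.2
  have hS : (U * Matrix.diagonal (fun i => ((|hA.eigenvalues i| : ℝ) : ℂ)) * star U).PosSemidef :=
    conj_diag_posSemidef hA.eigenvectorUnitary.2 (fun i => abs_nonneg _)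
  have hspec : A = U * Matrix.diagonal (RCLike.ofReal ∘ hA.eigenvalues) * star U :=
    hA.spectral_theorem
  have hAA : A * A = U * Matrix.diagonal
      (fun i => (RCLike.ofReal ∘ hA.eigenvalues) i * (RCLike.ofReal ∘ hA.eigenvalues) i)
      * star U := by
    conv_lhs => rw [hspec]
    rw [conj_mul_key hU]
  symm
  apply mAbs_eq_of_sq_eq hS
  rw [pow_two, conj_mul_key hU, hA.eq, hAA]
  have hfun : (fun i => ((|hA.eigenvalues i| : ℝ) : ℂ) * ((|hA.eigenvalues i| : ℝ) : ℂ)) =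
      (fun i => (RCLike.ofReal ∘ hA.eigenvalues) i * (RCLike.ofReal ∘ hA.eigenvalues) i) := by
    funext i
    show ((|hA.eigenvalues i| : ℝ) : ℂ) * ((|hA.eigenvalues i| : ℝ) : ℂ) =
      ((hA.eigenvalues i : ℝ) : ℂ) * ((hA.eigenvalues i : ℝ) : ℂ)
    rw [← Complex.ofReal_mul, ← Complex.ofReal_mul, abs_mul_abs_self]
  rw [hfun]

lemma mAbs_sub_posSemidef {A : Matrix m m ℂ} (hA : A.IsHermitian) :
    (mAbs A - A).PosSemidef := by
  set U : Matrix m m ℂ := (hA.eigenvectorUnitary : Matrix m m ℂ) with hUdef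
  have hspec : A = U * Matrix.diagonal (RCLike.ofReal ∘ hA.eigenvalues) * star U :=
    hA.spectral_theorem
  have h1 : (U * Matrix.diagonal (fun i => ((|hA.eigenvalues i| : ℝ) : ℂ)) * star U) -
      (U * Matrix.diagonal (RCLike.ofReal ∘ hA.eigenvalues) * star U) =
      U * Matrix.diagonal (fun i => ((|hA.eigenvalues i| - hA.eigenvalues i : ℝ) : ℂ)) * star U := by
    rw [← Matrix.sub_mul, ← Matrix.mul_sub, Matrix.diagonal_sub]
    have hfun : (fun i => ((|hA.eigenvalues i| : ℝ) : ℂ) - (RCLike.ofReal ∘ hA.eigenvalues) i) =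
        (fun i => ((|hA.eigenvalues i| - hA.eigenvalues i : ℝ) : ℂ)) := by
      funext i
      show ((|hA.eigenvalues i| : ℝ) : ℂ) - ((hA.eigenvalues i : ℝ) : ℂ) = _
      push_cast
      ring
    rw [hfun]
  have h2 : mAbs A - A =
      U * Matrix.diagonal (fun i => ((|hA.eigenvalues i| - hA.eigenvalues i : ℝ) : ℂ)) * star U := by
    rw [mAbs_of_hermitian hA, ← h1, ← hspec]
  rw [h2]
  exact conj_diag_posSemidef hA.eigenvectorUnitary.2
    (fun i => sub_nonneg.mpr (le_abs_self _))

lemma mAbs_add_posSemidef {A : Matrix m m ℂ} (hA : A.IsHermitian) :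
    (mAbs A + A).PosSemidef := by
  set U : Matrix m m ℂ := (hA.eigenvectorUnitary : Matrix m m ℂ) with hUdef
  have hspec : A = U * Matrix.diagonal (RCLike.ofReal ∘ hA.eigenvalues) * star U :=
    hA.spectral_theorem
  have h1 : (U * Matrix.diagonal (fun i => ((|hA.eigenvalues i| : ℝ) : ℂ)) * star U) +
      (U * Matrix.diagonal (RCLike.ofReal ∘ hA.eigenvalues) * star U) =
      U * Matrix.diagonal (fun i => ((|hA.eigenvalues i| + hA.eigenvalues i : ℝ) : ℂ)) * star U := by
    rw [← Matrix.add_mul, ← Matrix.mul_add, Matrix.diagonal_add]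
    have hfun : (fun i => ((|hA.eigenvalues i| : ℝ) : ℂ) + (RCLike.ofReal ∘ hA.eigenvalues) i) =
        (fun i => ((|hA.eigenvalues i| + hA.eigenvalues i : ℝ) : ℂ)) := by
      funext i
      show ((|hA.eigenvalues i| : ℝ) : ℂ) + ((hA.eigenvalues i : ℝ) : ℂ) = _
      push_cast
      ring
    rw [hfun]
  have h2 : mAbs A + A =
      U * Matrix.diagonal (fun i => ((|hA.eigenvalues i| + hA.eigenvalues i : ℝ) : ℂ)) * star U := by
    rw [mAbs_of_hermitian hA, ← h1, ← hspec]
  rw [h2]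
  exact conj_diag_posSemidef hA.eigenvectorUnitary.2
    (fun i => by linarith [neg_abs_le (hA.eigenvalues i)])

lemma key_ineq {A B : Matrix m m ℂ} (hA : A.IsHermitian) (hB : B.IsHermitian) :
    ((A * B).trace).re ≤ ((mAbs A * mAbs B).trace).re := by
  have h1 := trace_mul_re_nonneg (mAbs_sub_posSemidef hA) (mAbs_add_posSemidef hB)
  have h2 := trace_mul_re_nonneg (mAbs_add_posSemidef hA) (mAbs_sub_posSemidef hB)
  have hid : (mAbs A - A) * (mAbs B + B) + (mAbs A + A) * (mAbs B - B) =
      mAbs A * mAbs B + mAbs A * mAbs B - (A * B) - (A * B) := by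
    noncomm_ring
  have htr := congrArg (fun M : Matrix m m ℂ => (Matrix.trace M).re) hid
  simp only [Matrix.trace_add, Matrix.trace_sub, Complex.add_re, Complex.sub_re] at htr
  linarith

lemma posSemidef_fromBlocks_diag {A B : Matrix m m ℂ} (hA : A.PosSemidef) (hB : B.PosSemidef) :
    (Matrix.fromBlocks A 0 0 B).PosSemidef := by
  have h : Matrix.fromBlocks A 0 0 B =
      (Matrix.fromBlocks (CFC.sqrt A) 0 0 (CFC.sqrt B))ᴴ *
        Matrix.fromBlocks (CFC.sqrt A) 0 0 (CFC.sqrt B) := by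
    rw [Matrix.fromBlocks_conjTranspose, Matrix.fromBlocks_multiply]
    simp [(CFC.sqrt_nonneg A).posSemidef.1.eq, (CFC.sqrt_nonneg B).posSemidef.1.eq,
      CFC.sqrt_mul_sqrt_self A hA.nonneg, CFC.sqrt_mul_sqrt_self B hB.nonneg]
  rw [h]
  exact Matrix.posSemidef_conjTranspose_mul_self _

lemma dilation_isHermitian (X : Matrix m m ℂ) :
    (Matrix.fromBlocks (0 : Matrix m m ℂ) X Xᴴ 0).IsHermitian := by
  rw [Matrix.IsHermitian, Matrix.fromBlocks_conjTranspose]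
  simp

lemma mAbs_dilation (X : Matrix m m ℂ) :
    mAbs (Matrix.fromBlocks (0 : Matrix m m ℂ) X Xᴴ 0) =
      Matrix.fromBlocks (mAbs Xᴴ) 0 0 (mAbs X) := by
  symm
  apply mAbs_eq_of_sq_eq
    (posSemidef_fromBlocks_diag (mAbs_posSemidef Xᴴ) (mAbs_posSemidef X))
  rw [pow_two, Matrix.fromBlocks_multiply, Matrix.fromBlocks_conjTranspose,
    Matrix.fromBlocks_multiply]
  simp [mAbs_mul_self]

lemma trace_fromBlocks_diag (A : Matrix m m ℂ) (B C : Matrix m m ℂ) (D : Matrix m m ℂ) :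
    (Matrix.fromBlocks A B C D).trace = A.trace + D.trace := by
  simp [Matrix.trace, Fintype.sum_sum_type]

lemma main_key (X Y : Matrix m m ℂ) :
    ((Yᴴ * X).trace).re + ((Xᴴ * Y).trace).re ≤
      ((mAbs Xᴴ * mAbs Yᴴ).trace).re + ((mAbs X * mAbs Y).trace).re := by
  have h := key_ineq (dilation_isHermitian X) (dilation_isHermitian Y)
  rw [mAbs_dilation X, mAbs_dilation Y, Matrix.fromBlocks_multiply,
    Matrix.fromBlocks_multiply] at h
  simp only [Matrix.mul_zero, Matrix.zero_mul, add_zero, zero_add] at h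
  rw [trace_fromBlocks_diag, trace_fromBlocks_diag, Complex.add_re, Complex.add_re] at h
  rwa [Matrix.trace_mul_comm X Yᴴ] at h

end Aux

theorem stmt_13 {n : ℕ} (X Y : Matrix (Fin n) (Fin n) ℂ) :
    hsNorm (matAbs Xᴴ - matAbs Yᴴ) ^ 2 + hsNorm (matAbs X - matAbs Y) ^ 2 ≤
      2 * hsNorm (X - Y) ^ 2 := by
  have habs : ∀ Z : Matrix (Fin n) (Fin n) ℂ, matAbs Z = mAbs Z := fun _ => rfl
  have hsq : ∀ Z : Matrix (Fin n) (Fin n) ℂ, hsNorm Z ^ 2 = ((Zᴴ * Z).trace).re := fun Z =>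
    Real.sq_sqrt (trace_re_nonneg (Matrix.posSemidef_conjTranspose_mul_self Z))
  rw [hsq, hsq, hsq, habs, habs, habs, habs]
  set a := mAbs Xᴴ; set b := mAbs X; set c := mAbs Yᴴ; set d := mAbs Y
  have ha : aᴴ = a := (mAbs_posSemidef Xᴴ).1.eq
  have hb : bᴴ = b := (mAbs_posSemidef X).1.eq
  have hc : cᴴ = c := (mAbs_posSemidef Yᴴ).1.eq
  have hd : dᴴ = d := (mAbs_posSemidef Y).1.eq
  have e1 : (a - c)ᴴ * (a - c) = a * a - a * c - c * a + c * c := by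
    rw [Matrix.conjTranspose_sub, ha, hc]; noncomm_ring
  have e2 : (b - d)ᴴ * (b - d) = b * b - b * d - d * b + d * d := by
    rw [Matrix.conjTranspose_sub, hb, hd]; noncomm_ring
  have e3 : (X - Y)ᴴ * (X - Y) = Xᴴ * X - Xᴴ * Y - Yᴴ * X + Yᴴ * Y := by
    rw [Matrix.conjTranspose_sub]; noncomm_ring
  rw [e1, e2, e3]
  have haa : a * a = X * Xᴴ := by simpa using mAbs_mul_self Xᴴ
  have hbb : b * b = Xᴴ * X := mAbs_mul_self X
  have hcc : c * c = Y * Yᴴ := by simpa using mAbs_mul_self Yᴴ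
  have hdd : d * d = Yᴴ * Y := mAbs_mul_self Y
  rw [haa, hbb, hcc, hdd]
  have tca : (c * a).trace = (a * c).trace := Matrix.trace_mul_comm c a
  have tdb : (d * b).trace = (b * d).trace := Matrix.trace_mul_comm d b
  have tXX : (X * Xᴴ).trace = (Xᴴ * X).trace := Matrix.trace_mul_comm X Xᴴ
  have tYY : (Y * Yᴴ).trace = (Yᴴ * Y).trace := Matrix.trace_mul_comm Y Yᴴ
  have tXY : ((Xᴴ * Y).trace).re = ((Yᴴ * X).trace).re := by
    have : (Yᴴ * X)ᴴ = Xᴴ * Y := by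
      rw [Matrix.conjTranspose_mul, Matrix.conjTranspose_conjTranspose]
    calc ((Xᴴ * Y).trace).re = ((Yᴴ * X)ᴴ.trace).re := by rw [this]
      _ = ((Yᴴ * X).trace).re := by rw [Matrix.trace_conjTranspose]; simp
  have hmain := main_key X Y
  simp only [Matrix.trace_add, Matrix.trace_sub, Complex.add_re, Complex.sub_re,
    tca, tdb, tXX, tYY] at *
  linarith
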